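/- An integer b with 0 < b < n is a breakpoint of a parking function f of length n (i.e. |{i : f(i) ≤ b}| = b) if and only if there exist parking functions f₁ of length b and f₂ of length n-b and a (b, n-b)-shuffle σ such that f = (f₁ × f₂) ∘ σ. -/
import Mathlib

/-- `σ` is an `L`-shuffle for a composition `L = (n₁,…,n_r)`. -/
def IsCompShuffle (n : ℕ) (L : List ℕ) (σ : Equiv.Perm (Fin n)) : Prop :=
  ∀ (k : ℕ) (i j : Fin n), (L.take k).sum ≤ (i : ℕ) → (j : ℕ) < (L.take (k + 1)).sum →
    (i : ℕ) < (j : ℕ) → σ⁻¹ i < σ⁻¹ j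

/-- `f` is a parking function. -/
def IsParking {n : ℕ} (f : Fin n → Fin n) : Prop :=
  ∃ (g : Fin n → Fin n) (σ : Equiv.Perm (Fin n)),
    Monotone g ∧ (∀ i : Fin n, (g i : ℕ) ≤ (i : ℕ)) ∧ f = g ∘ σ

/-- Concatenation `f × g`. -/
def concatF {n m : ℕ} (f : Fin n → Fin n) (g : Fin m → Fin m) :
    Fin (n + m) → Fin (n + m) := fun i =>
  if h : (i : ℕ) < n then
    ⟨(f ⟨i, h⟩ : ℕ), Nat.lt_of_lt_of_le (f ⟨i, h⟩).isLt (Nat.le_add_right n m)⟩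
  else
    ⟨n + (g ⟨(i : ℕ) - n, by have := i.isLt; omega⟩ : ℕ),
      Nat.add_lt_add_left (g ⟨(i : ℕ) - n, by have := i.isLt; omega⟩).isLt n⟩

lemma card_filter_val_lt (n m : ℕ) (h : m ≤ n) :
    (Finset.univ.filter fun j : Fin n => (j : ℕ) < m).card = m := by
  have he : (Finset.univ.filter fun j : Fin n => (j : ℕ) < m) =
      (Finset.range m).attachFin
        (fun a ha => lt_of_lt_of_le (Finset.mem_range.mp ha) h) := by
    ext j; simp [Finset.mem_attachFin]
  rw [he, Finset.card_attachFin, Finset.card_range]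

lemma card_filter_val_lt_le (n m : ℕ) :
    (Finset.univ.filter fun j : Fin n => (j : ℕ) < m).card ≤ m := by
  have := Finset.card_le_card_of_injOn (fun j : Fin n => (j : ℕ))
    (s := Finset.univ.filter fun j : Fin n => (j : ℕ) < m) (t := Finset.range m)
    (by intro a ha; simp at ha ⊢; exact ha)
    (fun a _ b _ hab => Fin.val_injective hab)
  simpa using this

lemma card_filter_comp {n : ℕ} (σ : Equiv.Perm (Fin n)) (p : Fin n → Prop)
    [DecidablePred p] :
    (Finset.univ.filter fun i => p (σ i)).card = (Finset.univ.filter p).card := by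
  apply Finset.card_bij (fun i _ => σ i)
  · intro a ha; simp at ha ⊢; exact ha
  · intro a _ b _ h; exact σ.injective h
  · intro c hc; refine ⟨σ.symm c, ?_, by simp⟩; simp at hc ⊢; exact hc

lemma isParking_iff {n : ℕ} (f : Fin n → Fin n) :
    IsParking f ↔ ∀ k, k ≤ n → k ≤ (Finset.univ.filter fun i => (f i : ℕ) < k).card := by
  constructor
  · rintro ⟨g, σ, hmono, hle, rfl⟩ k hk
    have h1 : (Finset.univ.filter fun i => ((g ∘ σ) i : ℕ) < k).card
        = (Finset.univ.filter fun i => (g i : ℕ) < k).card :=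
      card_filter_comp σ (fun i => (g i : ℕ) < k)
    rw [h1]
    calc k = (Finset.univ.filter fun j : Fin n => (j : ℕ) < k).card :=
          (card_filter_val_lt n k hk).symm
      _ ≤ _ := Finset.card_le_card (by
          intro j hj; simp at hj ⊢; exact lt_of_le_of_lt (hle j) hj)
  · intro hc
    refine ⟨f ∘ Tuple.sort f, (Tuple.sort f)⁻¹, Tuple.monotone_sort f, ?_, ?_⟩
    · intro i
      by_contra hgt
      push_neg at hgt
      have h1 := hc ((i : ℕ) + 1) i.isLt
      have h2 : (Finset.univ.filter fun j => (f (Tuple.sort f j) : ℕ) < (i : ℕ) + 1).card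
          = (Finset.univ.filter fun j => (f j : ℕ) < (i : ℕ) + 1).card :=
        card_filter_comp (Tuple.sort f) (fun j => (f j : ℕ) < (i : ℕ) + 1)
      have h3 : (Finset.univ.filter fun j => (f (Tuple.sort f j) : ℕ) < (i : ℕ) + 1) ⊆
          Finset.univ.filter fun j : Fin n => (j : ℕ) < (i : ℕ) := by
        intro j hj
        simp only [Finset.mem_filter, Finset.mem_univ, true_and] at hj ⊢
        by_contra hji
        push_neg at hji
        have hmo : f (Tuple.sort f i) ≤ f (Tuple.sort f j) :=
          Tuple.monotone_sort f (show i ≤ j from hji)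
        have := hgt.trans_le hmo
        omega
      have h4 := Finset.card_le_card h3
      have h5 := card_filter_val_lt_le n (i : ℕ)
      simp only [Function.comp_apply] at hgt
      omega
    · funext i
      simp [Function.comp]

/-- `b` (with `0 < b < n`) is a breakpoint of a parking function `f`
(`|{i : f(i) ≤ b}| = b`, stated 0-indexed as `|{i : f(i) < b}| = b`) iff
`f = (f₁ × f₂) ∘ σ` for parking functions `f₁, f₂` of lengths `b, n-b` and
a `(b, n-b)`-shuffle `σ`. -/
theorem breakpoint_iff_split (n : ℕ) (f : Fin n → Fin n) (hf : IsParking f)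
    (b : ℕ) (hb0 : 0 < b) (hbn : b < n) :
    (Finset.univ.filter fun i : Fin n => (f i : ℕ) < b).card = b ↔
      ∃ (f₁ : Fin b → Fin b) (f₂ : Fin (n - b) → Fin (n - b)) (σ : Equiv.Perm (Fin n)),
        IsParking f₁ ∧ IsParking f₂ ∧ IsCompShuffle n [b, n - b] σ ∧
        f = fun i : Fin n =>
          finCongr (by omega : b + (n - b) = n)
            (concatF f₁ f₂ (finCongr (by omega : n = b + (n - b)) (σ i))) := by
  constructor
  · intro hcard
    classical
    have hfc' := (isParking_iff f).mp hf
    have hS : (Finset.univ.filter fun i : Fin n => (f i : ℕ) < b).card = b := hcard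
    have hT : (Finset.univ.filter fun i : Fin n => ¬ ((f i : ℕ) < b)).card = n - b := by
      have := Finset.card_filter_add_card_filter_not
        (s := (Finset.univ : Finset (Fin n))) (p := fun i => (f i : ℕ) < b)
      simp only [Finset.card_univ, Fintype.card_fin] at this
      omega
    have hfa : ∀ k, (f (Finset.orderEmbOfFin _ hS k) : ℕ) < b := by
      intro k
      have := Finset.orderEmbOfFin_mem _ hS k
      rw [Finset.mem_filter] at this
      exact this.2
    have hfc : ∀ k, b ≤ (f (Finset.orderEmbOfFin _ hT k) : ℕ) := by
      intro k
      have := Finset.orderEmbOfFin_mem _ hT k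
      rw [Finset.mem_filter] at this
      omega
    -- the bijection
    set ρfun : Fin n → Fin n := fun i =>
      if h : (i : ℕ) < b then Finset.orderEmbOfFin _ hS ⟨i, h⟩
      else Finset.orderEmbOfFin _ hT ⟨(i : ℕ) - b, by have := i.isLt; omega⟩ with hρdef
    have hinj : Function.Injective ρfun := by
      intro i j hij
      simp only [hρdef] at hij
      split_ifs at hij with h1 h2 h2
      · have := (Finset.orderEmbOfFin _ hS).injective hij
        have : ((⟨(i : ℕ), h1⟩ : Fin b) : ℕ) = ((⟨(j : ℕ), h2⟩ : Fin b) : ℕ) := by rw [this]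
        exact Fin.ext this
      · exfalso
        have h3 := hfa ⟨(i : ℕ), h1⟩
        rw [hij] at h3
        have h4 := hfc ⟨(j : ℕ) - b, by have := j.isLt; omega⟩
        omega
      · exfalso
        have h3 := hfa ⟨(j : ℕ), h2⟩
        rw [← hij] at h3
        have h4 := hfc ⟨(i : ℕ) - b, by have := i.isLt; omega⟩
        omega
      · have := (Finset.orderEmbOfFin _ hT).injective hij
        have hv : (i : ℕ) - b = (j : ℕ) - b := congrArg Fin.val this
        exact Fin.ext (by omega)
    set ρe : Equiv.Perm (Fin n) := Equiv.ofBijective ρfun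
      (Finite.injective_iff_bijective.mp hinj) with hρedef
    have hρapp : ∀ i : Fin n, ρe i = ρfun i := fun i => rfl
    have hρ1 : ∀ (i : Fin n) (h : (i : ℕ) < b),
        ρe i = Finset.orderEmbOfFin _ hS ⟨i, h⟩ := by
      intro i h
      rw [hρapp, hρdef]
      exact dif_pos h
    have hρ2 : ∀ (i : Fin n) (h : ¬ ((i : ℕ) < b)),
        ρe i = Finset.orderEmbOfFin _ hT ⟨(i : ℕ) - b, by have := i.isLt; omega⟩ := by
      intro i h
      rw [hρapp, hρdef]
      exact dif_neg h
    refine ⟨fun k => ⟨(f (Finset.orderEmbOfFin _ hS k) : ℕ), hfa k⟩,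
      fun k => ⟨(f (Finset.orderEmbOfFin _ hT k) : ℕ) - b,
        by have := (f (Finset.orderEmbOfFin _ hT k)).isLt; have := hfc k; omega⟩,
      ρe.symm, ?_, ?_, ?_, ?_⟩
    · -- f₁ parking
      rw [isParking_iff]
      intro k hk
      have h1 := hfc' k (by omega)
      have h2 : (Finset.univ.filter fun x : Fin b =>
          ((⟨(f (Finset.orderEmbOfFin _ hS x) : ℕ), hfa x⟩ : Fin b) : ℕ) < k).card
          = (Finset.univ.filter fun i : Fin n => (f i : ℕ) < k).card := by
        apply Finset.card_bij (fun x _ => Finset.orderEmbOfFin _ hS x)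
        · intro x hx
          simp only [Finset.mem_filter, Finset.mem_univ, true_and] at hx ⊢
          exact hx
        · intro x _ y _ hxy
          exact (Finset.orderEmbOfFin _ hS).injective hxy
        · intro i hi
          simp only [Finset.mem_filter, Finset.mem_univ, true_and] at hi
          have hiS : i ∈ Finset.univ.filter fun i : Fin n => (f i : ℕ) < b := by
            simp only [Finset.mem_filter, Finset.mem_univ, true_and]
            omega
          have : i ∈ Set.range (Finset.orderEmbOfFin _ hS) := by
            rw [Finset.range_orderEmbOfFin]
            exact_mod_cast hiS
          obtain ⟨x, hx⟩ := this
          refine ⟨x, ?_, hx⟩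
          simp only [Finset.mem_filter, Finset.mem_univ, true_and]
          rw [hx]
          exact hi
      omega
    · -- f₂ parking
      rw [isParking_iff]
      intro k hk
      have h1 := hfc' (b + k) (by omega)
      have h2 : (Finset.univ.filter fun x : Fin (n - b) =>
          ((⟨(f (Finset.orderEmbOfFin _ hT x) : ℕ) - b,
            by have := (f (Finset.orderEmbOfFin _ hT x)).isLt; have := hfc x; omega⟩
              : Fin (n - b)) : ℕ) < k).card
          = (Finset.univ.filter fun i : Fin n =>
              (f i : ℕ) < b + k ∧ ¬ ((f i : ℕ) < b)).card := by
        apply Finset.card_bij (fun x _ => Finset.orderEmbOfFin _ hT x)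
        · intro x hx
          simp only [Finset.mem_filter, Finset.mem_univ, true_and] at hx ⊢
          have := hfc x
          omega
        · intro x _ y _ hxy
          exact (Finset.orderEmbOfFin _ hT).injective hxy
        · intro i hi
          simp only [Finset.mem_filter, Finset.mem_univ, true_and] at hi
          have hiT : i ∈ Finset.univ.filter fun i : Fin n => ¬ ((f i : ℕ) < b) := by
            simp only [Finset.mem_filter, Finset.mem_univ, true_and]
            exact hi.2
          have : i ∈ Set.range (Finset.orderEmbOfFin _ hT) := by
            rw [Finset.range_orderEmbOfFin]
            exact_mod_cast hiT
          obtain ⟨x, hx⟩ := this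
          refine ⟨x, ?_, hx⟩
          simp only [Finset.mem_filter, Finset.mem_univ, true_and]
          rw [hx]
          omega
      have h3 : (Finset.univ.filter fun i : Fin n => (f i : ℕ) < b + k ∧ (f i : ℕ) < b).card
          + (Finset.univ.filter fun i : Fin n =>
              (f i : ℕ) < b + k ∧ ¬ ((f i : ℕ) < b)).card
          = (Finset.univ.filter fun i : Fin n => (f i : ℕ) < b + k).card := by
        rw [← Finset.filter_filter, ← Finset.filter_filter]
        exact Finset.card_filter_add_card_filter_not
          (p := fun i : Fin n => (f i : ℕ) < b)
      have h4 : (Finset.univ.filter fun i : Fin n => (f i : ℕ) < b + k ∧ (f i : ℕ) < b)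
          = Finset.univ.filter fun i : Fin n => (f i : ℕ) < b := by
        apply Finset.filter_congr
        intro i _
        constructor
        · exact fun h => h.2
        · exact fun h => ⟨by omega, h⟩
      rw [h4, hS] at h3
      omega
    · -- shuffle
      intro k i j h1 h2 hij
      have hinv : ∀ x : Fin n, (ρe.symm)⁻¹ x = ρe x := fun x => rfl
      rw [hinv, hinv]
      match k with
      | 0 =>
        simp only [List.take, List.sum_cons, List.sum_nil] at h1 h2
        have hjb : (j : ℕ) < b := by omega
        have hib : (i : ℕ) < b := by omega
        rw [hρ1 i hib, hρ1 j hjb]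
        exact (Finset.orderEmbOfFin _ hS).strictMono (show (⟨i, hib⟩ : Fin b) < ⟨j, hjb⟩ from hij)
      | 1 =>
        simp only [List.take, List.sum_cons, List.sum_nil] at h1 h2
        have hib : ¬ ((i : ℕ) < b) := by omega
        have hjb : ¬ ((j : ℕ) < b) := by omega
        rw [hρ2 i hib, hρ2 j hjb]
        exact (Finset.orderEmbOfFin _ hT).strictMono
          (show ((⟨(i : ℕ) - b, _⟩ : Fin (n - b))) < ⟨(j : ℕ) - b, _⟩ from by
            simp only [Fin.mk_lt_mk]; omega)
      | (m + 2) =>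
        exfalso
        have : (List.take (m + 2) [b, n - b]).sum = n := by
          rw [List.take_of_length_le (by simp)]
          simp; omega
        have := i.isLt
        omega
    · -- equality
      funext i
      apply Fin.ext
      have hji : ρe (ρe.symm i) = i := ρe.apply_symm_apply i
      simp only [finCongr_apply, Fin.coe_cast, concatF]
      by_cases h : ((ρe.symm i : Fin n) : ℕ) < b
      · rw [dif_pos h]
        simp only [Fin.coe_cast]
        rw [← hρ1 (ρe.symm i) h, hji]
      · rw [dif_neg h]
        simp only [Fin.coe_cast]
        have hr := hρ2 (ρe.symm i) h
        rw [hji] at hr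
        rw [← hr]
        have hge := hfc ⟨((ρe.symm i : Fin n) : ℕ) - b, by have := (ρe.symm i).isLt; omega⟩
        have hge2 : b ≤ (f i : ℕ) := by rw [hr]; exact hge
        omega

  · rintro ⟨f₁, f₂, σ, -, -, -, hfe⟩
    have hval : ∀ i : Fin n, (f i : ℕ) < b ↔ ((σ i : Fin n) : ℕ) < b := by
      subst hfe
      intro i
      simp only [finCongr_apply, Fin.coe_cast, concatF]
      by_cases h : ((σ i : Fin n) : ℕ) < b
      · rw [dif_pos h]
        simp only [Fin.coe_cast]
        exact ⟨fun _ => h, fun _ => (f₁ ⟨(σ i : Fin n), h⟩).isLt⟩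
      · rw [dif_neg h]
        simp only [Fin.coe_cast]
        constructor
        · intro hlt; omega
        · intro hlt; exact absurd hlt h
    have h1 : (Finset.univ.filter fun i : Fin n => (f i : ℕ) < b)
        = Finset.univ.filter fun i : Fin n => ((σ i : Fin n) : ℕ) < b := by
      apply Finset.filter_congr
      intro i _
      exact hval i
    rw [h1, card_filter_comp σ (fun j : Fin n => (j : ℕ) < b),
      card_filter_val_lt n b (le_of_lt hbn)]
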